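/- Let σ ⊆ ℚⁿ be a pointed polyhedral cone, P an integral σ∨-polyhedron contained in σ∨, and I[P] = ⨁_{m ∈ P∩ℤⁿ} k·χ^m ⊆ A = k[σ∨∩ℤⁿ]. Then for every integer e ≥ 1 the integral closure of I[P]^e in A equals I[eP] = ⨁_{m ∈ (eP)∩ℤⁿ} k·χ^m. -/

import Mathlib

open scoped Pointwise
open Finset

namespace Paper

/-- Standard pairing on `ℚⁿ`. -/
def dot {n : ℕ} (m v : Fin n → ℚ) : ℚ := ∑ i, m i * v i

/-- Dual cone `σ∨ = {m | ∀ v ∈ σ, ⟨m,v⟩ ≥ 0}`. -/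
def dualCone {n : ℕ} (σ : Set (Fin n → ℚ)) : Set (Fin n → ℚ) :=
  {m | ∀ v ∈ σ, 0 ≤ dot m v}

/-- A polyhedral cone: the cone generated by finitely many vectors. -/
def IsPolyhedralCone {n : ℕ} (σ : Set (Fin n → ℚ)) : Prop :=
  ∃ (k : ℕ) (g : Fin k → Fin n → ℚ),
    σ = {v | ∃ c : Fin k → ℚ, (∀ i, 0 ≤ c i) ∧ v = ∑ i, c i • g i}

/-- A pointed (strongly convex) cone contains no line. -/
def Pointed {n : ℕ} (σ : Set (Fin n → ℚ)) : Prop := ∀ v ∈ σ, -v ∈ σ → v = 0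

/-- The canonical embedding `ℤⁿ → ℚⁿ`. -/
def Lq {n : ℕ} (m : Fin n → ℤ) : Fin n → ℚ := fun i => (m i : ℚ)

/-- A rational vector is a lattice point if all coordinates are integers. -/
def IsLatticePt {n : ℕ} (v : Fin n → ℚ) : Prop := ∀ i, ∃ z : ℤ, v i = (z : ℚ)

/-- A `σ`-polyhedron: Minkowski sum of a (nonempty) polytope with the cone `σ`. -/
def IsSigmaPolyhedron {n : ℕ} (σ Δ : Set (Fin n → ℚ)) : Prop :=
  ∃ F : Finset (Fin n → ℚ), F.Nonempty ∧ Δ = convexHull ℚ (↑F : Set (Fin n → ℚ)) + σ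

/-- An integral `σv`-polyhedron: Minkowski sum of a lattice polytope with `σv`. -/
def IsIntegralPoly {n : ℕ} (σv P : Set (Fin n → ℚ)) : Prop :=
  ∃ F : Finset (Fin n → ℤ), F.Nonempty ∧ P = convexHull ℚ (Lq '' (↑F : Set (Fin n → ℤ))) + σv

/-- The `e`-fold Minkowski sum `eP` of `P`, with the convention `0P = σv`. -/
def mink {n : ℕ} (σv P : Set (Fin n → ℚ)) : ℕ → Set (Fin n → ℚ)
  | 0 => σv
  | 1 => P
  | (e + 2) => mink σv P (e + 1) + P

/-- The semigroup `σ∨ ∩ ℤⁿ` of lattice points of the dual cone. -/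
def latticeDual {n : ℕ} (σ : Set (Fin n → ℚ)) : AddSubmonoid (Fin n → ℤ) where
  carrier := {m | Lq m ∈ dualCone σ}
  zero_mem' := by
    intro v hv
    simp [dot, Lq]
  add_mem' := by
    intro a b ha hb v hv
    have h1 := ha v hv
    have h2 := hb v hv
    have h : dot (Lq (a + b)) v = dot (Lq a) v + dot (Lq b) v := by
      simp only [dot, Lq, Pi.add_apply]
      rw [← Finset.sum_add_distrib]
      apply Finset.sum_congr rfl
      intro i _
      push_cast
      ring
    rw [Set.mem_setOf_eq] at *
    simpa [dualCone, h] using add_nonneg h1 h2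

/-- The monomial `χ^m` in the semigroup algebra `k[σ∨ ∩ ℤⁿ]`. -/
noncomputable def mono (k : Type*) [CommRing k] {n : ℕ} (σ : Set (Fin n → ℚ))
    (m : latticeDual σ) : AddMonoidAlgebra k (latticeDual σ) :=
  AddMonoidAlgebra.single m 1

/-- The monomial ideal `I[P]` generated by the monomials `χ^m`, `m ∈ P ∩ ℤⁿ`. -/
noncomputable def idealOf (k : Type*) [CommRing k] {n : ℕ} (σ : Set (Fin n → ℚ))
    (P : Set (Fin n → ℚ)) : Ideal (AddMonoidAlgebra k (latticeDual σ)) :=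
  Ideal.span {f | ∃ m : latticeDual σ, Lq (m : Fin n → ℤ) ∈ P ∧ f = mono k σ m}

/-- `a` satisfies an equation of integral dependence over the ideal `I`:
`a^r + λ₁ a^(r-1) + ⋯ + λ_r = 0` with `λᵢ ∈ Iⁱ`. -/
def IntegralOverIdeal {A : Type*} [CommRing A] (I : Ideal A) (a : A) : Prop :=
  ∃ r : ℕ, 0 < r ∧ ∃ c : ℕ → A, (∀ i ∈ Finset.Icc 1 r, c i ∈ I ^ i) ∧
    a ^ r + ∑ i ∈ Finset.Icc 1 r, c i * a ^ (r - i) = 0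

/-- A monomial (torus-homogeneous) ideal of `k[σ∨ ∩ ℤⁿ]`. -/
def IsMonomialIdeal (k : Type*) [CommRing k] {n : ℕ} (σ : Set (Fin n → ℚ))
    (I : Ideal (AddMonoidAlgebra k (latticeDual σ))) : Prop :=
  ∃ S : Set (latticeDual σ), I = Ideal.span {f | ∃ m ∈ S, f = mono k σ m}

section Work
-- dot lemmas
variable {n : ℕ}

lemma dot_add_left (x y v : Fin n → ℚ) : dot (x + y) v = dot x v + dot y v := by
  simp [dot, add_mul, Finset.sum_add_distrib]

lemma dot_smul_left (c : ℚ) (x v : Fin n → ℚ) : dot (c • x) v = c * dot x v := by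
  simp [dot, Finset.mul_sum, mul_assoc]

lemma dot_sum_left {ι : Type*} (s : Finset ι) (f : ι → Fin n → ℚ) (v : Fin n → ℚ) :
    dot (∑ i ∈ s, f i) v = ∑ i ∈ s, dot (f i) v := by
  classical
  induction s using Finset.cons_induction with
  | empty => simp [dot]
  | cons a s ha ih => rw [Finset.sum_cons, Finset.sum_cons, dot_add_left, ih]

lemma dot_comm (x v : Fin n → ℚ) : dot x v = dot v x := by
  simp [dot, mul_comm]

lemma dot_sub_left (x y v : Fin n → ℚ) : dot (x - y) v = dot x v - dot y v := by
  simp [dot, sub_mul, Finset.sum_sub_distrib]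

lemma Lq_add (x y : Fin n → ℤ) : Lq (x + y) = Lq x + Lq y := by
  funext i; simp [Lq]

lemma Lq_nsmul (c : ℕ) (x : Fin n → ℤ) : Lq (c • x) = (c : ℚ) • Lq x := by
  funext i; simp [Lq]

lemma Lq_sum {ι : Type*} (s : Finset ι) (f : ι → Fin n → ℤ) :
    Lq (∑ i ∈ s, f i) = ∑ i ∈ s, Lq (f i) := by
  classical
  induction s using Finset.cons_induction with
  | empty => funext i; simp [Lq]
  | cons a s ha ih => rw [Finset.sum_cons, Finset.sum_cons, Lq_add, ih]

lemma Lq_inj : Function.Injective (Lq (n := n)) := by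
  intro x y h
  funext i
  have := congrFun h i
  simpa [Lq] using this


-- dual cone lemmas
lemma dc_add {σ : Set (Fin n → ℚ)} {x y : Fin n → ℚ} (hx : x ∈ dualCone σ)
    (hy : y ∈ dualCone σ) : x + y ∈ dualCone σ := by
  intro v hv
  have := add_nonneg (hx v hv) (hy v hv)
  simpa [dot_add_left] using this

lemma dc_zero (σ : Set (Fin n → ℚ)) : (0 : Fin n → ℚ) ∈ dualCone σ := by
  intro v hv; simp [dot]

lemma dc_smul {σ : Set (Fin n → ℚ)} {c : ℚ} (hc : 0 ≤ c) {x : Fin n → ℚ}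
    (hx : x ∈ dualCone σ) : c • x ∈ dualCone σ := by
  intro v hv
  rw [dot_smul_left]
  exact mul_nonneg hc (hx v hv)

lemma dc_add_self (σ : Set (Fin n → ℚ)) : dualCone σ + dualCone σ = dualCone σ := by
  apply Set.Subset.antisymm
  · rintro x ⟨a, ha, b, hb, rfl⟩
    exact dc_add ha hb
  · intro x hx
    exact ⟨x, hx, 0, dc_zero σ, by simp⟩

-- convexity: lower bound of dot on a hull
lemma dot_ge_on_hull {S : Set (Fin n → ℚ)} {w : Fin n → ℚ} {β : ℚ}
    (hS : ∀ z ∈ S, β ≤ dot z w) {y : Fin n → ℚ} (hy : y ∈ convexHull ℚ S) :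
    β ≤ dot y w := by
  rw [_root_.convexHull_eq] at hy
  obtain ⟨ι, t, wt, z, hw0, hw1, hz, rfl⟩ := hy
  rw [Finset.centerMass_eq_of_sum_1 _ _ hw1]
  rw [dot_sum_left]
  calc β = ∑ i ∈ t, wt i * β := by rw [← Finset.sum_mul, hw1, one_mul]
  _ ≤ ∑ i ∈ t, dot (wt i • z i) w := by
        apply Finset.sum_le_sum
        intro i hi
        rw [dot_smul_left]
        exact mul_le_mul_of_nonneg_left (hS _ (hz i hi)) (hw0 i hi)

-- iterated sumsets of a finset of lattice points
noncomputable def sumF (F : Finset (Fin n → ℤ)) : ℕ → Finset (Fin n → ℤ)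
  | 0 => {0}
  | e + 1 => letI := Classical.decEq (Fin n → ℤ); sumF F e + F

lemma mem_sumF_succ {F : Finset (Fin n → ℤ)} {e : ℕ} {x : Fin n → ℤ} :
    x ∈ sumF F (e + 1) ↔ ∃ y ∈ sumF F e, ∃ f ∈ F, y + f = x := by
  classical
  simp [sumF, Finset.mem_add]

lemma sumF_nonempty {F : Finset (Fin n → ℤ)} (hF : F.Nonempty) (e : ℕ) :
    (sumF F e).Nonempty := by
  induction e with
  | zero => exact ⟨0, by simp [sumF]⟩
  | succ e ih =>
    obtain ⟨y, hy⟩ := ih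
    obtain ⟨f, hf⟩ := hF
    exact ⟨y + f, mem_sumF_succ.2 ⟨y, hy, f, hf, rfl⟩⟩

lemma nsmul_mem_sumF {F : Finset (Fin n → ℤ)} {f : Fin n → ℤ} (hf : f ∈ F) (e : ℕ) :
    (e + 1) • f ∈ sumF F (e + 1) := by
  induction e with
  | zero => exact mem_sumF_succ.2 ⟨0, by simp [sumF], f, hf, by simp [one_nsmul]⟩
  | succ e ih => exact mem_sumF_succ.2 ⟨(e + 1) • f, ih, f, hf, by rw [← succ_nsmul]⟩


lemma image_add_set (S T : Set (Fin n → ℤ)) : Lq '' (S + T) = Lq '' S + Lq '' T := by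
  ext x
  constructor
  · rintro ⟨z, ⟨a, ha, b, hb, rfl⟩, rfl⟩
    exact ⟨Lq a, ⟨a, ha, rfl⟩, Lq b, ⟨b, hb, rfl⟩, (Lq_add a b).symm⟩
  · rintro ⟨-, ⟨a, ha, rfl⟩, -, ⟨b, hb, rfl⟩, rfl⟩
    exact ⟨a + b, ⟨a, ha, b, hb, rfl⟩, Lq_add a b⟩

lemma minkQ (σ : Set (Fin n → ℚ)) (P : Set (Fin n → ℚ)) (F : Finset (Fin n → ℤ))
    (hPeq : P = convexHull ℚ (Lq '' (↑F : Set (Fin n → ℤ))) + dualCone σ) :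
    ∀ e : ℕ, mink (dualCone σ) P e
      = convexHull ℚ (Lq '' (↑(sumF F e) : Set (Fin n → ℤ))) + dualCone σ := by
  classical
  have base0 : mink (dualCone σ) P 0
      = convexHull ℚ (Lq '' (↑(sumF F 0) : Set (Fin n → ℤ))) + dualCone σ := by
    show dualCone σ = _
    have : (↑(sumF F 0) : Set (Fin n → ℤ)) = {0} := by simp [sumF]
    rw [this]
    have hLq0 : Lq (0 : Fin n → ℤ) = (0 : Fin n → ℚ) := by funext i; simp [Lq]
    rw [Set.image_singleton, hLq0, convexHull_singleton]
    ext x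
    constructor
    · intro hx; exact ⟨0, rfl, x, hx, by simp⟩
    · rintro ⟨a, rfl, b, hb, rfl⟩; simpa using hb
  have sumF1 : sumF F 1 = F := by
    classical
    ext x
    rw [show (1 : ℕ) = 0 + 1 from rfl, mem_sumF_succ]
    constructor
    · rintro ⟨y, hy, f, hf, rfl⟩
      simp only [sumF, Finset.mem_singleton] at hy
      simpa [hy] using hf
    · intro hx; exact ⟨0, by simp [sumF], x, hx, by simp⟩
  intro e
  induction e with
  | zero => exact base0
  | succ e ih =>
    match e, ih with
    | 0, _ => show P = _; rw [sumF1]; exact hPeq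
    | (e + 1), ih =>
      show mink (dualCone σ) P (e + 1) + P = _
      rw [ih, hPeq]
      have : (↑(sumF F (e + 1 + 1)) : Set (Fin n → ℤ))
          = (↑(sumF F (e + 1)) : Set (Fin n → ℤ)) + (↑F : Set (Fin n → ℤ)) := by
        ext x
        rw [Finset.mem_coe, mem_sumF_succ, Set.mem_add]
        simp only [Finset.mem_coe]
      rw [this, image_add_set, convexHull_add]
      rw [show ∀ A B C D : Set (Fin n → ℚ), (A + B) + (C + D) = (A + C) + (B + D) from
        fun A B C D => by rw [add_assoc, ← add_assoc B C D, add_comm B C, add_assoc, ← add_assoc],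
        dc_add_self]

lemma memP_of_memF {σ P : Set (Fin n → ℚ)} {F : Finset (Fin n → ℤ)}
    (hPeq : P = convexHull ℚ (Lq '' (↑F : Set (Fin n → ℤ))) + dualCone σ)
    {f : Fin n → ℤ} (hf : f ∈ F) : Lq f ∈ P := by
  rw [hPeq]
  exact ⟨Lq f, subset_convexHull ℚ _ ⟨f, hf, rfl⟩, 0, dc_zero σ, by simp⟩

lemma sumF_dual {σ P : Set (Fin n → ℚ)} {F : Finset (Fin n → ℤ)}
    (hPeq : P = convexHull ℚ (Lq '' (↑F : Set (Fin n → ℤ))) + dualCone σ)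
    (hPsub : P ⊆ dualCone σ) {e : ℕ} {g : Fin n → ℤ} (hg : g ∈ sumF F e) :
    Lq g ∈ dualCone σ := by
  induction e generalizing g with
  | zero =>
    simp only [sumF, Finset.mem_singleton] at hg
    subst hg
    have : Lq (0 : Fin n → ℤ) = 0 := by funext i; simp [Lq]
    rw [this]; exact dc_zero σ
  | succ e ih =>
    obtain ⟨y, hy, f, hf, rfl⟩ := mem_sumF_succ.1 hg
    rw [Lq_add]
    exact dc_add (ih hy) (hPsub (memP_of_memF hPeq hf))

-- algebra basics
lemma lat_us (σ : Set (Fin n → ℚ)) : UniqueSums (latticeDual σ) :=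
  UniqueSums.of_injective_addHom ⟨Subtype.val, fun _ _ => rfl⟩ Subtype.val_injective
    inferInstance

lemma lat_nzd (k : Type*) [Field k] (σ : Set (Fin n → ℚ)) :
    NoZeroDivisors (AddMonoidAlgebra k (latticeDual σ)) := by
  haveI := lat_us σ
  infer_instance

variable {k : Type*} [Field k]

lemma mono_mul (σ : Set (Fin n → ℚ)) (x y : latticeDual σ) :
    mono k σ (x + y) = mono k σ x * mono k σ y := by
  rw [mono, mono, mono, AddMonoidAlgebra.single_mul_single, one_mul]

lemma mono_zero (σ : Set (Fin n → ℚ)) : mono k σ 0 = 1 := rfl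

lemma mono_pow (σ : Set (Fin n → ℚ)) (c : ℕ) (x : latticeDual σ) :
    mono k σ (c • x) = (mono k σ x) ^ c := by
  induction c with
  | zero => simp [mono_zero]
  | succ c ih => rw [succ_nsmul, mono_mul, ih, pow_succ]

lemma mono_sum {ι : Type*} (σ : Set (Fin n → ℚ)) (s : Finset ι) (f : ι → latticeDual σ) :
    mono k σ (∑ i ∈ s, f i) = ∏ i ∈ s, mono k σ (f i) := by
  classical
  induction s using Finset.cons_induction with
  | empty => simp [mono_zero]
  | cons a s ha ih => rw [Finset.sum_cons, Finset.prod_cons, mono_mul, ih]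

lemma mono_ne_zero (σ : Set (Fin n → ℚ)) (x : latticeDual σ) : mono k σ x ≠ (0 : AddMonoidAlgebra k (latticeDual σ)) := by
  rw [mono]
  intro h
  have := (AddMonoidAlgebra.single_eq_zero).1 h
  exact one_ne_zero this

lemma supp_span {σ : Set (Fin n → ℚ)} {pr : latticeDual σ → Prop}
    {a : AddMonoidAlgebra k (latticeDual σ)}
    (ha : a ∈ Ideal.span {f | ∃ m : latticeDual σ, pr m ∧ f = mono k σ m}) :
    ∀ u ∈ a.coeff.support, ∃ m : latticeDual σ, pr m ∧ ∃ s : latticeDual σ, u = m + s := by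
  classical
  refine Submodule.span_induction ?_ ?_ ?_ ?_ ha
  · rintro x ⟨m, hm, rfl⟩ u hu
    have := Finsupp.support_single_subset hu
    rw [Finset.mem_singleton] at this
    exact ⟨m, hm, 0, by rw [this, add_zero]⟩
  · intro u hu; simp at hu
  · intro x y hx hy ihx ihy u hu
    have := Finsupp.support_add hu
    rw [Finset.mem_union] at this
    rcases this with h | h
    · exact ihx u h
    · exact ihy u h
  · intro r x hx ihx u hu
    rw [smul_eq_mul] at hu
    have := AddMonoidAlgebra.support_coeff_mul_subset r x hu
    rw [Finset.mem_add] at this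
    obtain ⟨y, hy, z, hz, rfl⟩ := this
    obtain ⟨m, hm, s, rfl⟩ := ihx z hz
    exact ⟨m, hm, s + y, by simp [add_comm, add_left_comm]⟩

lemma mem_idealOf_of_supp {σ : Set (Fin n → ℚ)} {Q : Set (Fin n → ℚ)}
    {a : AddMonoidAlgebra k (latticeDual σ)}
    (ha : ∀ u ∈ a.coeff.support, Lq (u : Fin n → ℤ) ∈ Q) : a ∈ idealOf k σ Q := by
  classical
  have : a = ∑ u ∈ a.coeff.support, AddMonoidAlgebra.single u (a.coeff u) := by
    conv_lhs => rw [← AddMonoidAlgebra.sum_coeff_single a]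
    rfl
  rw [this]
  apply Ideal.sum_mem
  intro u hu
  have h1 : AddMonoidAlgebra.single u (a.coeff u) = (a.coeff u) • mono k σ u := by
    rw [mono, AddMonoidAlgebra.smul_single', mul_one]
  rw [h1]
  have : mono k σ u ∈ idealOf k σ Q := Ideal.subset_span ⟨u, ha u hu, rfl⟩
  exact Submodule.smul_of_tower_mem _ _ this

-- w-values
lemma dot_lat_add {σ : Set (Fin n → ℚ)} (x y : latticeDual σ) (w : Fin n → ℚ) :
    dot (Lq ↑(x + y)) w = dot (Lq (x : Fin n → ℤ)) w + dot (Lq (y : Fin n → ℤ)) w := by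
  rw [show ((x + y : latticeDual σ) : Fin n → ℤ) = ↑x + ↑y from rfl, Lq_add, dot_add_left]

lemma dot_ge_mu_of_memP {σ P : Set (Fin n → ℚ)} {F : Finset (Fin n → ℤ)}
    (hPeq : P = convexHull ℚ (Lq '' (↑F : Set (Fin n → ℤ))) + dualCone σ)
    (hF : F.Nonempty) {w : Fin n → ℚ} (hw : w ∈ σ) {x : Fin n → ℚ} (hx : x ∈ P) :
    F.inf' hF (fun f => dot (Lq f) w) ≤ dot x w := by
  rw [hPeq] at hx
  obtain ⟨y, hy, sv, hs, rfl⟩ := hx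
  rw [dot_add_left]
  have h1 : F.inf' hF (fun f => dot (Lq f) w) ≤ dot y w := by
    apply dot_ge_on_hull (S := Lq '' (↑F : Set (Fin n → ℤ))) _ hy
    rintro z ⟨f, hf, rfl⟩
    exact Finset.inf'_le _ hf
  have h2 : 0 ≤ dot sv w := hs w hw
  linarith

lemma supp_ideal_mu {k : Type*} [Field k] {σ P : Set (Fin n → ℚ)} {F : Finset (Fin n → ℤ)}
    (hPeq : P = convexHull ℚ (Lq '' (↑F : Set (Fin n → ℤ))) + dualCone σ)
    (hF : F.Nonempty) {w : Fin n → ℚ} (hw : w ∈ σ)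
    {g : AddMonoidAlgebra k (latticeDual σ)} (hg : g ∈ idealOf k σ P) :
    ∀ z ∈ g.coeff.support, F.inf' hF (fun f => dot (Lq f) w) ≤ dot (Lq (z : Fin n → ℤ)) w := by
  intro z hz
  obtain ⟨m, hm, s, rfl⟩ := supp_span hg z hz
  rw [dot_lat_add]
  have h1 := dot_ge_mu_of_memP hPeq hF hw hm
  have h2 : 0 ≤ dot (Lq (s : Fin n → ℤ)) w := s.2 w hw
  linarith

lemma supp_pow_mu {k : Type*} [Field k] {σ P : Set (Fin n → ℚ)} {F : Finset (Fin n → ℤ)}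
    (hPeq : P = convexHull ℚ (Lq '' (↑F : Set (Fin n → ℤ))) + dualCone σ)
    (hF : F.Nonempty) {w : Fin n → ℚ} (hw : w ∈ σ) (j : ℕ)
    {f : AddMonoidAlgebra k (latticeDual σ)} (hf : f ∈ (idealOf k σ P) ^ j) :
    ∀ u ∈ f.coeff.support, (j : ℚ) * F.inf' hF (fun f => dot (Lq f) w) ≤ dot (Lq (u : Fin n → ℤ)) w := by
  classical
  induction j generalizing f with
  | zero =>
    intro u _
    simpa using u.2 w hw
  | succ j ih =>
    rw [pow_succ] at hf
    refine Submodule.mul_induction_on hf ?_ ?_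
    · intro x hx y hy u hu
      have := AddMonoidAlgebra.support_coeff_mul_subset x y hu
      rw [Finset.mem_add] at this
      obtain ⟨z1, hz1, z2, hz2, rfl⟩ := this
      rw [dot_lat_add]
      have b1 := ih hx z1 hz1
      have b2 := supp_ideal_mu hPeq hF hw hy z2 hz2
      push_cast
      linarith
    · intro x y ihx ihy u hu
      have := Finsupp.support_add hu
      rw [Finset.mem_union] at this
      rcases this with h | h
      · exact ihx u h
      · exact ihy u h

-- minimal part multiplies
lemma inf_mul {k : Type*} [Field k] {σ : Set (Fin n → ℚ)} (w : Fin n → ℚ)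
    {f g : AddMonoidAlgebra k (latticeDual σ)} (hf : f ≠ 0) (hg : g ≠ 0) :
    ∃ t ∈ (f * g).coeff.support,
      dot (Lq (t : Fin n → ℤ)) w
        ≤ (f.coeff.support.inf' (Finsupp.support_nonempty_iff.2 (AddMonoidAlgebra.coeff_eq_zero.not.2 hf))
             (fun u => dot (Lq (u : Fin n → ℤ)) w))
          + (g.coeff.support.inf' (Finsupp.support_nonempty_iff.2 (AddMonoidAlgebra.coeff_eq_zero.not.2 hg))
             (fun u => dot (Lq (u : Fin n → ℤ)) w)) := by
  classical
  haveI := lat_nzd k σ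
  set W : latticeDual σ → ℚ := fun u => dot (Lq (u : Fin n → ℤ)) w with hW
  set nf := f.coeff.support.inf' (Finsupp.support_nonempty_iff.2 (AddMonoidAlgebra.coeff_eq_zero.not.2 hf)) W
  set ng := g.coeff.support.inf' (Finsupp.support_nonempty_iff.2 (AddMonoidAlgebra.coeff_eq_zero.not.2 hg)) W
  set f1 : AddMonoidAlgebra k (latticeDual σ) := AddMonoidAlgebra.ofCoeff (Finsupp.filter (fun u => W u ≤ nf) f.coeff) with hf1
  set f2 : AddMonoidAlgebra k (latticeDual σ) := AddMonoidAlgebra.ofCoeff (Finsupp.filter (fun u => ¬ (W u ≤ nf)) f.coeff) with hf2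
  set g1 : AddMonoidAlgebra k (latticeDual σ) := AddMonoidAlgebra.ofCoeff (Finsupp.filter (fun u => W u ≤ ng) g.coeff) with hg1
  set g2 : AddMonoidAlgebra k (latticeDual σ) := AddMonoidAlgebra.ofCoeff (Finsupp.filter (fun u => ¬ (W u ≤ ng)) g.coeff) with hg2
  have hfsum : f1 + f2 = f := congrArg AddMonoidAlgebra.ofCoeff (Finsupp.filter_pos_add_filter_neg f.coeff _)
  have hgsum : g1 + g2 = g := congrArg AddMonoidAlgebra.ofCoeff (Finsupp.filter_pos_add_filter_neg g.coeff _)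
  -- supports
  have hsf1 : f1.coeff.support = f.coeff.support.filter (fun u => W u ≤ nf) := Finsupp.support_filter _ _
  have hsf2 : f2.coeff.support = f.coeff.support.filter (fun u => ¬ (W u ≤ nf)) := Finsupp.support_filter _ _
  have hsg1 : g1.coeff.support = g.coeff.support.filter (fun u => W u ≤ ng) := Finsupp.support_filter _ _
  have hsg2 : g2.coeff.support = g.coeff.support.filter (fun u => ¬ (W u ≤ ng)) := Finsupp.support_filter _ _
  have hf1ne : f1 ≠ 0 := by
    obtain ⟨b, hb, hbe⟩ := Finset.exists_mem_eq_inf' (Finsupp.support_nonempty_iff.2 (AddMonoidAlgebra.coeff_eq_zero.not.2 hf)) W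
    intro h0
    have : b ∈ f1.coeff.support := by
      rw [hsf1, Finset.mem_filter]
      exact ⟨hb, le_of_eq hbe.symm⟩
    rw [h0] at this
    simp at this
  have hg1ne : g1 ≠ 0 := by
    obtain ⟨b, hb, hbe⟩ := Finset.exists_mem_eq_inf' (Finsupp.support_nonempty_iff.2 (AddMonoidAlgebra.coeff_eq_zero.not.2 hg)) W
    intro h0
    have : b ∈ g1.coeff.support := by
      rw [hsg1, Finset.mem_filter]
      exact ⟨hb, le_of_eq hbe.symm⟩
    rw [h0] at this
    simp at this
  have hprod : f1 * g1 ≠ 0 := mul_ne_zero hf1ne hg1ne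
  obtain ⟨t, ht⟩ := Finsupp.support_nonempty_iff.2 (AddMonoidAlgebra.coeff_eq_zero.not.2 hprod)
  -- t has W-value nf + ng
  have htv : W t = nf + ng := by
    have := AddMonoidAlgebra.support_coeff_mul_subset f1 g1 ht
    rw [Finset.mem_add] at this
    obtain ⟨y, hy, z, hz, rfl⟩ := this
    rw [hsf1, Finset.mem_filter] at hy
    rw [hsg1, Finset.mem_filter] at hz
    have hy2 : nf ≤ W y := Finset.inf'_le _ hy.1
    have hz2 : ng ≤ W z := Finset.inf'_le _ hz.1
    have : W (y + z) = W y + W z := dot_lat_add y z w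
    rw [this]
    have e1 : W y = nf := le_antisymm hy.2 hy2
    have e2 : W z = ng := le_antisymm hz.2 hz2
    rw [e1, e2]
  -- other products vanish at t
  have key : ∀ (p q : AddMonoidAlgebra k (latticeDual σ)),
      (∀ y ∈ p.coeff.support, nf ≤ W y) → (∀ z ∈ q.coeff.support, ng ≤ W z) →
      (∀ y ∈ p.coeff.support, ∀ z ∈ q.coeff.support, ¬ (W y = nf ∧ W z = ng)) → (p * q).coeff t = 0 := by
    intro p q hp hq hpq
    by_contra h0
    have ht' : t ∈ (p * q).coeff.support := Finsupp.mem_support_iff.2 h0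
    have := AddMonoidAlgebra.support_coeff_mul_subset p q ht'
    rw [Finset.mem_add] at this
    obtain ⟨y, hy, z, hz, heq⟩ := this
    have hWt : W y + W z = nf + ng := by
      rw [← dot_lat_add y z w, heq]
      exact htv.symm ▸ rfl
    have h1 := hp y hy
    have h2 := hq z hz
    have e1 : W y = nf := by linarith
    have e2 : W z = ng := by linarith
    exact hpq y hy z hz ⟨e1, e2⟩
  have hval : (f * g).coeff t = (f1 * g1).coeff t := by
    conv_lhs => rw [← hfsum, ← hgsum]
    rw [add_mul, mul_add, mul_add]
    simp only [AddMonoidAlgebra.coeff_add, Finsupp.add_apply]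
    have v1 : (f1 * g2).coeff t = 0 := by
      apply key
      · intro y hy
        rw [hsf1, Finset.mem_filter] at hy
        exact Finset.inf'_le _ hy.1
      · intro z hz
        rw [hsg2, Finset.mem_filter] at hz
        exact Finset.inf'_le _ hz.1
      · intro y hy z hz hc
        rw [hsg2, Finset.mem_filter] at hz
        exact hz.2 (le_of_eq hc.2)
    have v2 : (f2 * g1).coeff t = 0 := by
      apply key
      · intro y hy
        rw [hsf2, Finset.mem_filter] at hy
        exact Finset.inf'_le _ hy.1
      · intro z hz
        rw [hsg1, Finset.mem_filter] at hz
        exact Finset.inf'_le _ hz.1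
      · intro y hy z hz hc
        rw [hsf2, Finset.mem_filter] at hy
        exact hy.2 (le_of_eq hc.1)
    have v3 : (f2 * g2).coeff t = 0 := by
      apply key
      · intro y hy
        rw [hsf2, Finset.mem_filter] at hy
        exact Finset.inf'_le _ hy.1
      · intro z hz
        rw [hsg2, Finset.mem_filter] at hz
        exact Finset.inf'_le _ hz.1
      · intro y hy z hz hc
        rw [hsf2, Finset.mem_filter] at hy
        exact hy.2 (le_of_eq hc.1)
    rw [v1, v2, v3]
    simp
  have htfg : t ∈ (f * g).coeff.support := by
    rw [Finsupp.mem_support_iff, hval]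
    exact Finsupp.mem_support_iff.1 ht
  exact ⟨t, htfg, le_of_eq htv⟩

lemma pow_inf {k : Type*} [Field k] {σ : Set (Fin n → ℚ)} (w : Fin n → ℚ)
    {a : AddMonoidAlgebra k (latticeDual σ)} (ha : a ≠ 0) (j : ℕ) :
    ∃ h : a ^ j ≠ 0, ∃ t ∈ (a ^ j).coeff.support,
      dot (Lq (t : Fin n → ℤ)) w
        ≤ (j : ℚ) * (a.coeff.support.inf' (Finsupp.support_nonempty_iff.2 (AddMonoidAlgebra.coeff_eq_zero.not.2 ha))
            (fun u => dot (Lq (u : Fin n → ℤ)) w)) := by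
  classical
  haveI := lat_nzd k σ
  induction j with
  | zero =>
    refine ⟨by simp, 0, ?_, by simp [dot, Lq, ZeroMemClass.coe_zero]⟩
    rw [pow_zero]
    change (0 : latticeDual σ) ∈ (1 : AddMonoidAlgebra k (latticeDual σ)).coeff.support
    rw [AddMonoidAlgebra.one_def]
    rw [Finsupp.mem_support_iff, AddMonoidAlgebra.coeff_single, Finsupp.single_apply]
    simp
  | succ j ih =>
    obtain ⟨hpne, t, htmem, htle⟩ := ih
    have hne : a ^ (j + 1) ≠ 0 := pow_ne_zero _ ha
    refine ⟨hne, ?_⟩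
    obtain ⟨t', ht', hle'⟩ := inf_mul w hpne ha
    rw [← pow_succ] at ht'
    refine ⟨t', ht', ?_⟩
    have hinfle : ((a ^ j).coeff.support.inf' (Finsupp.support_nonempty_iff.2 (AddMonoidAlgebra.coeff_eq_zero.not.2 hpne))
        (fun u => dot (Lq (u : Fin n → ℤ)) w)) ≤ (j : ℚ) *
          (a.coeff.support.inf' (Finsupp.support_nonempty_iff.2 (AddMonoidAlgebra.coeff_eq_zero.not.2 ha))
            (fun u => dot (Lq (u : Fin n → ℤ)) w)) :=
      le_trans (Finset.inf'_le _ htmem) htle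
    push_cast
    nlinarith [hle', hinfle]

-- Farkas lemma via Fourier–Motzkin elimination
theorem farkas : ∀ (N : ℕ) (ι : Type) (_ : Fintype ι) (A : ι → Fin N → ℚ) (b : ι → ℚ),
    (¬ ∃ x : Fin N → ℚ, ∀ i, ∑ j, A i j * x j ≤ b i) →
    ∃ y : ι → ℚ, (∀ i, 0 ≤ y i) ∧ (∀ j, ∑ i, y i * A i j = 0) ∧ ∑ i, y i * b i < 0 := by
  intro N
  induction N with
  | zero =>
    intro ι instι A b h
    classical
    push_neg at h
    obtain ⟨i0, hi0⟩ := h (fun j => 0)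
    simp only [Finset.univ_eq_empty, Finset.sum_empty, not_le] at hi0
    refine ⟨fun i => if i = i0 then 1 else 0, ?_, ?_, ?_⟩
    · intro i; dsimp only; split <;> norm_num
    · intro j; exact j.elim0
    · have : ∑ i, (if i = i0 then (1 : ℚ) else 0) * b i
          = ∑ i, (if i = i0 then b i else 0) := by
        apply Finset.sum_congr rfl; intro i _; split <;> simp
      rw [this, Finset.sum_ite_eq']
      simpa using hi0
  | succ N ih =>
    intro ι instι A b h
    classical
    set al : ι → ℚ := fun i => A i (Fin.last N) with hal
    set A0 : ι → Fin N → ℚ := fun i j => A i j.castSucc with hA0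
    let ι' : Type := {i : ι // al i = 0} ⊕ ({i : ι // 0 < al i} × {i : ι // al i < 0})
    let A' : ι' → Fin N → ℚ := fun i' => match i' with
      | Sum.inl i => A0 i.1
      | Sum.inr (p, q) => fun j => al p.1 * A0 q.1 j - al q.1 * A0 p.1 j
    let b' : ι' → ℚ := fun i' => match i' with
      | Sum.inl i => b i.1
      | Sum.inr (p, q) => al p.1 * b q.1 - al q.1 * b p.1
    have h' : ¬ ∃ x' : Fin N → ℚ, ∀ i', ∑ j, A' i' j * x' j ≤ b' i' := by
      rintro ⟨x', hx'⟩
      apply h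
      set β : ι → ℚ := fun i => b i - ∑ j, A0 i j * x' j with hβ
      have hzero : ∀ i, al i = 0 → 0 ≤ β i := by
        intro i hi
        have := hx' (Sum.inl ⟨i, hi⟩)
        simp only [A', b'] at this
        simp only [hβ]
        linarith
      have hpq : ∀ (p : {i : ι // 0 < al i}) (q : {i : ι // al i < 0}),
          al q.1 * β p.1 ≤ al p.1 * β q.1 := by
        intro p q
        have key := hx' (Sum.inr (p, q))
        simp only [A', b'] at key
        have expand : ∑ j, (al p.1 * A0 q.1 j - al q.1 * A0 p.1 j) * x' j
            = al p.1 * (∑ j, A0 q.1 j * x' j) - al q.1 * (∑ j, A0 p.1 j * x' j) := by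
          rw [Finset.mul_sum, Finset.mul_sum, ← Finset.sum_sub_distrib]
          apply Finset.sum_congr rfl; intro j _; ring
        rw [expand] at key
        simp only [hβ]
        nlinarith [key]
      by_cases hpos : Nonempty {i : ι // 0 < al i}
      · haveI := hpos
        set t := (Finset.univ.inf' Finset.univ_nonempty
          (fun p : {i : ι // 0 < al i} => β p.1 / al p.1)) with hT
        refine ⟨(Fin.snoc x' t : Fin (N+1) → ℚ), ?_⟩
        intro i
        have hsum : ∑ j, A i j * (Fin.snoc x' t : Fin (N+1) → ℚ) j
            = (∑ j, A0 i j * x' j) + al i * t := by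
          rw [Fin.sum_univ_castSucc]
          simp [A0, al]
        rw [hsum]
        rcases lt_trichotomy (al i) 0 with hneg | hzer | hposi
        · have hall : ∀ p : {i0 : ι // 0 < al i0}, β i / al i ≤ β p.1 / al p.1 := by
            intro p
            have h1 := hpq p ⟨i, hneg⟩
            rw [div_le_iff_of_neg hneg, div_mul_eq_mul_div, div_le_iff₀ p.2]
            dsimp only at h1 ⊢
            nlinarith [h1]
          have hti : β i / al i ≤ t := Finset.le_inf' _ _ (fun p _ => hall p)
          have h2 := (div_le_iff_of_neg hneg).1 hti
          simp only [hβ] at h2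
          rw [mul_comm]
          linarith
        · have h0 := hzero i hzer
          rw [hzer]
          simp only [hβ] at h0
          linarith
        · have hti : t ≤ β i / al i :=
            Finset.inf'_le _ (Finset.mem_univ (⟨i, hposi⟩ : {i : ι // 0 < al i}))
          have h2 := (le_div_iff₀ hposi).1 hti
          simp only [hβ] at h2
          rw [mul_comm]
          linarith
      · by_cases hneg : Nonempty {i : ι // al i < 0}
        · haveI := hneg
          set t := (Finset.univ.sup' Finset.univ_nonempty
            (fun q : {i : ι // al i < 0} => β q.1 / al q.1)) with hT
          refine ⟨(Fin.snoc x' t : Fin (N+1) → ℚ), ?_⟩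
          intro i
          have hsum : ∑ j, A i j * (Fin.snoc x' t : Fin (N+1) → ℚ) j
              = (∑ j, A0 i j * x' j) + al i * t := by
            rw [Fin.sum_univ_castSucc]
            simp [A0, al]
          rw [hsum]
          rcases lt_trichotomy (al i) 0 with hne | hzer | hposi
          · have hti : β i / al i ≤ t :=
              Finset.le_sup' (f := fun q : {i0 : ι // al i0 < 0} => β q.1 / al q.1) (Finset.mem_univ (⟨i, hne⟩ : {i0 : ι // al i0 < 0}))
            have h2 := (div_le_iff_of_neg hne).1 hti
            simp only [hβ] at h2
            rw [mul_comm]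
            linarith
          · have h0 := hzero i hzer
            rw [hzer]
            simp only [hβ] at h0
            linarith
          · exact absurd ⟨⟨i, hposi⟩⟩ hpos
        · refine ⟨(Fin.snoc x' 0 : Fin (N+1) → ℚ), ?_⟩
          intro i
          have hsum : ∑ j, A i j * (Fin.snoc x' 0 : Fin (N+1) → ℚ) j
              = (∑ j, A0 i j * x' j) + al i * 0 := by
            rw [Fin.sum_univ_castSucc]
            simp [A0, al]
          rw [hsum]
          have hzer : al i = 0 := by
            rcases lt_trichotomy (al i) 0 with hne | hzer | hposi
            · exact absurd ⟨⟨i, hne⟩⟩ hneg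
            · exact hzer
            · exact absurd ⟨⟨i, hposi⟩⟩ hpos
          have h0 := hzero i hzer
          simp only [hβ] at h0
          rw [hzer]
          linarith
    obtain ⟨y', hy'0, hy'A, hy'b⟩ := ih ι' inferInstance A' b' h'
    let contrib : ι' → ι → ℚ := fun i' i => match i' with
      | Sum.inl j => if i = j.1 then 1 else 0
      | Sum.inr (p, q) => (if i = p.1 then -al q.1 else 0) + (if i = q.1 then al p.1 else 0)
    have hkey : ∀ (v : ι → ℚ) (i' : ι'), ∑ i, contrib i' i * v i
        = (match i' with
           | Sum.inl j => v j.1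
           | Sum.inr (p, q) => -al q.1 * v p.1 + al p.1 * v q.1) := by
      intro v i'
      rcases i' with j | ⟨p, q⟩
      · have : ∀ i, contrib (Sum.inl j) i * v i = if i = j.1 then v i else 0 := by
          intro i; dsimp only [contrib]; split <;> simp
        rw [Finset.sum_congr rfl (fun i _ => this i), Finset.sum_ite_eq']
        simp
      · have : ∀ i, contrib (Sum.inr (p, q)) i * v i
            = (if i = p.1 then -al q.1 * v i else 0) + (if i = q.1 then al p.1 * v i else 0) := by
          intro i; dsimp only [contrib]; split <;> split <;> ring
        rw [Finset.sum_congr rfl (fun i _ => this i), Finset.sum_add_distrib,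
          Finset.sum_ite_eq', Finset.sum_ite_eq']
        simp
    have hswap : ∀ v : ι → ℚ, ∑ i, (∑ i', y' i' * contrib i' i) * v i
        = ∑ i', y' i' * (∑ i, contrib i' i * v i) := by
      intro v
      have : ∀ i, (∑ i', y' i' * contrib i' i) * v i = ∑ i', y' i' * contrib i' i * v i := by
        intro i; rw [Finset.sum_mul]
      rw [Finset.sum_congr rfl (fun i _ => this i), Finset.sum_comm]
      apply Finset.sum_congr rfl; intro i' _
      rw [Finset.mul_sum]
      apply Finset.sum_congr rfl; intro i _; ring
    refine ⟨fun i => ∑ i', y' i' * contrib i' i, ?_, ?_, ?_⟩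
    · intro i
      apply Finset.sum_nonneg
      intro i' _
      apply mul_nonneg (hy'0 i')
      rcases i' with j | ⟨p, q⟩
      · dsimp only [contrib]; split <;> norm_num
      · dsimp only [contrib]
        have hp := p.2
        have hq := q.2
        split <;> split <;> linarith
    · intro j
      refine Fin.lastCases ?_ ?_ j
      · rw [hswap (fun i => A i (Fin.last N))]
        apply Finset.sum_eq_zero
        intro i' _
        rw [hkey]
        rcases i' with jj | ⟨p, q⟩
        · have := jj.2
          dsimp only
          simp only [hal] at this
          rw [this, mul_zero]
        · dsimp only
          simp only [hal]
          ring
      · intro j0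
        rw [hswap (fun i => A i j0.castSucc)]
        have hcongr : ∑ i', y' i' * (∑ i, contrib i' i * (fun i => A i j0.castSucc) i)
            = ∑ i', y' i' * A' i' j0 := by
          apply Finset.sum_congr rfl
          intro i' _
          rw [hkey]
          rcases i' with jj | ⟨p, q⟩
          · rfl
          · dsimp only [A']
            simp only [hA0]
            ring
        rw [hcongr]
        exact hy'A j0
    · rw [hswap b]
      have : ∀ i' : ι', y' i' * (∑ i, contrib i' i * b i) = y' i' * b' i' := by
        intro i'
        rw [hkey]
        rcases i' with jj | ⟨p, q⟩
        · rfl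
        · dsimp only [b']
          ring
      rw [Finset.sum_congr rfl (fun i' _ => this i')]
      exact hy'b

-- separation via Farkas
lemma separation {K : ℕ} {g : Fin K → Fin n → ℚ} {σ : Set (Fin n → ℚ)}
    (hσeq : σ = {v | ∃ c : Fin K → ℚ, (∀ i, 0 ≤ c i) ∧ v = ∑ i, c i • g i})
    (G : Finset (Fin n → ℤ)) (x : Fin n → ℚ)
    (hx : x ∉ convexHull ℚ (Lq '' (↑G : Set (Fin n → ℤ))) + dualCone σ) :
    ∃ w ∈ σ, ∀ gz ∈ G, dot x w < dot (Lq gz) w := by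
  classical
  set NG := G.card with hNG
  set pt : Fin NG → Fin n → ℚ := fun j => Lq ((G.equivFin.symm j) : Fin n → ℤ) with hpt
  have hptmem : ∀ j, pt j ∈ Lq '' (↑G : Set (Fin n → ℤ)) := by
    intro j
    exact ⟨_, (G.equivFin.symm j).2, rfl⟩
  -- the linear system
  set ι : Type := (Fin K) ⊕ (Bool ⊕ Fin NG) with hι
  set Amat : ι → Fin NG → ℚ := fun i' => match i' with
    | Sum.inl i => fun j => dot (pt j) (g i)
    | Sum.inr (Sum.inl true) => fun _ => 1
    | Sum.inr (Sum.inl false) => fun _ => -1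
    | Sum.inr (Sum.inr j0) => fun j => if j = j0 then -1 else 0
    with hAmat
  set bv : ι → ℚ := fun i' => match i' with
    | Sum.inl i => dot x (g i)
    | Sum.inr (Sum.inl true) => 1
    | Sum.inr (Sum.inl false) => -1
    | Sum.inr (Sum.inr _) => 0
    with hbv
  have hinf : ¬ ∃ lam : Fin NG → ℚ, ∀ i', ∑ j, Amat i' j * lam j ≤ bv i' := by
    rintro ⟨lam, hlam⟩
    apply hx
    have hnn : ∀ j, 0 ≤ lam j := by
      intro j
      have := hlam (Sum.inr (Sum.inr j))
      simp only [Amat, bv] at this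
      have hsum : ∑ j', (if j' = j then (-1 : ℚ) else 0) * lam j'
          = ∑ j', (if j' = j then -lam j' else 0) := by
        apply Finset.sum_congr rfl; intro j' _; split <;> ring
      rw [hsum, Finset.sum_ite_eq'] at this
      simp at this
      linarith
    have hsum1 : ∑ j, lam j = 1 := by
      have h1 := hlam (Sum.inr (Sum.inl true))
      have h2 := hlam (Sum.inr (Sum.inl false))
      simp only [Amat, bv] at h1 h2
      have e1 : ∑ j, (1 : ℚ) * lam j = ∑ j, lam j := by
        apply Finset.sum_congr rfl; intro j _; ring
      have e2 : ∑ j, (-1 : ℚ) * lam j = -∑ j, lam j := by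
        rw [← Finset.sum_neg_distrib]
        apply Finset.sum_congr rfl; intro j _; ring
      rw [e1] at h1
      rw [e2] at h2
      linarith
    set y := ∑ j, lam j • pt j with hy
    set sv := x - y with hsv
    have hyc : y ∈ convexHull ℚ (Lq '' (↑G : Set (Fin n → ℤ))) := by
      rw [_root_.convexHull_eq]
      refine ⟨Fin NG, Finset.univ, lam, pt, fun j _ => hnn j, by simpa using hsum1,
        fun j _ => hptmem j, ?_⟩
      rw [Finset.centerMass_eq_of_sum_1 _ _ (by simpa using hsum1)]
    have hsc : sv ∈ dualCone σ := by
      intro v hv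
      rw [hσeq] at hv
      obtain ⟨c, hc0, rfl⟩ := hv
      rw [dot_comm, dot_sum_left]
      apply Finset.sum_nonneg
      intro i _
      rw [dot_smul_left]
      apply mul_nonneg (hc0 i)
      rw [← dot_comm]
      -- 0 ≤ dot sv (g i)
      have := hlam (Sum.inl i)
      simp only [Amat, bv] at this
      rw [hsv, dot_sub_left, hy, dot_sum_left]
      have e3 : ∑ j, dot (lam j • pt j) (g i) = ∑ j, dot (pt j) (g i) * lam j := by
        apply Finset.sum_congr rfl; intro j _; rw [dot_smul_left]; ring
      rw [e3]
      linarith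
    exact ⟨y, hyc, sv, hsc, by rw [hsv]; ring⟩
  obtain ⟨yv, hy0, hyA, hyb⟩ := farkas NG ι inferInstance Amat bv hinf
  set w := ∑ i, yv (Sum.inl i) • g i with hw
  have hwσ : w ∈ σ := by
    rw [hσeq]
    exact ⟨fun i => yv (Sum.inl i), fun i => hy0 (Sum.inl i), rfl⟩
  set s' := yv (Sum.inr (Sum.inl true)) - yv (Sum.inr (Sum.inl false)) with hs'
  -- split the big sums
  have hsplit : ∀ v : ι → ℚ, ∑ i, v i
      = (∑ i : Fin K, v (Sum.inl i)) + ((v (Sum.inr (Sum.inl true)) + v (Sum.inr (Sum.inl false)))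
        + ∑ j : Fin NG, v (Sum.inr (Sum.inr j))) := by
    intro v
    rw [Fintype.sum_sum_type]
    congr 1
    rw [Fintype.sum_sum_type]
    congr 1
    simp
  have hdotw : ∀ z : Fin n → ℚ, dot z w = ∑ i : Fin K, yv (Sum.inl i) * dot z (g i) := by
    intro z
    rw [hw, dot_comm, dot_sum_left]
    apply Finset.sum_congr rfl
    intro i _
    rw [dot_smul_left, ← dot_comm]
  have hrow : ∀ j : Fin NG, dot (pt j) w + s' = yv (Sum.inr (Sum.inr j)) := by
    intro j
    have h0 := hyA j
    rw [hsplit (fun i => yv i * Amat i j)] at h0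
    have e1 : ∑ i : Fin K, yv (Sum.inl i) * Amat (Sum.inl i) j
        = ∑ i : Fin K, yv (Sum.inl i) * dot (pt j) (g i) := rfl
    have e2 : ∑ j0 : Fin NG, yv (Sum.inr (Sum.inr j0)) * Amat (Sum.inr (Sum.inr j0)) j
        = -yv (Sum.inr (Sum.inr j)) := by
      have : ∀ j0, yv (Sum.inr (Sum.inr j0)) * Amat (Sum.inr (Sum.inr j0)) j
          = if j0 = j then -yv (Sum.inr (Sum.inr j0)) else 0 := by
        intro j0
        simp only [Amat]
        by_cases hj : j = j0
        · subst hj; simp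
        · have hj' : ¬ (j0 = j) := fun hc => hj hc.symm
          simp [hj, hj']
      rw [Finset.sum_congr rfl (fun j0 _ => this j0), Finset.sum_ite_eq']
      simp
    rw [e1, e2] at h0
    have e3 : yv (Sum.inr (Sum.inl true)) * Amat (Sum.inr (Sum.inl true)) j
        = yv (Sum.inr (Sum.inl true)) := by simp [Amat]
    have e4 : yv (Sum.inr (Sum.inl false)) * Amat (Sum.inr (Sum.inl false)) j
        = -yv (Sum.inr (Sum.inl false)) := by simp [Amat]
    rw [e3, e4] at h0
    rw [hdotw (pt j), hs']
    linarith
  have hcost : dot x w + s' < 0 := by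
    have h0 := hyb
    rw [hsplit (fun i => yv i * bv i)] at h0
    have e2 : ∑ j0 : Fin NG, yv (Sum.inr (Sum.inr j0)) * bv (Sum.inr (Sum.inr j0)) = 0 := by
      apply Finset.sum_eq_zero; intro j0 _; simp [bv]
    have e3 : yv (Sum.inr (Sum.inl true)) * bv (Sum.inr (Sum.inl true))
        = yv (Sum.inr (Sum.inl true)) := by simp [bv]
    have e4 : yv (Sum.inr (Sum.inl false)) * bv (Sum.inr (Sum.inl false))
        = -yv (Sum.inr (Sum.inl false)) := by simp [bv]
    rw [e2, e3, e4] at h0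
    rw [hdotw x, hs']
    have e1 : ∑ i : Fin K, yv (Sum.inl i) * bv (Sum.inl i)
        = ∑ i : Fin K, yv (Sum.inl i) * dot x (g i) := rfl
    rw [e1] at h0
    linarith
  refine ⟨w, hwσ, ?_⟩
  intro gz hgz
  set j := G.equivFin ⟨gz, hgz⟩ with hj
  have hptj : pt j = Lq gz := by
    rw [hpt]
    simp [hj]
  have h1 := hrow j
  have h2 := hy0 (Sum.inr (Sum.inr j))
  rw [hptj] at h1
  linarith

lemma mem_of_dots {K : ℕ} {g : Fin K → Fin n → ℚ} {σ : Set (Fin n → ℚ)}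
    (hσeq : σ = {v | ∃ c : Fin K → ℚ, (∀ i, 0 ≤ c i) ∧ v = ∑ i, c i • g i})
    {F : Finset (Fin n → ℤ)} (hF : F.Nonempty) {e : ℕ} (he : 1 ≤ e)
    {m : Fin n → ℚ}
    (hm : ∀ w ∈ σ, (e : ℚ) * F.inf' hF (fun f => dot (Lq f) w) ≤ dot m w) :
    m ∈ convexHull ℚ (Lq '' (↑(sumF F e) : Set (Fin n → ℤ))) + dualCone σ := by
  by_contra hx
  obtain ⟨w, hwσ, hsep⟩ := separation hσeq (sumF F e) m hx
  obtain ⟨fstar, hfs, hfse⟩ := Finset.exists_mem_eq_inf' hF (fun f => dot (Lq f) w)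
  obtain ⟨e', rfl⟩ : ∃ e', e = e' + 1 := ⟨e - 1, by omega⟩
  have hg : (e' + 1) • fstar ∈ sumF F (e' + 1) := nsmul_mem_sumF hfs e'
  have hval : dot (Lq ((e' + 1) • fstar)) w = ((e' + 1 : ℕ) : ℚ) * dot (Lq fstar) w := by
    rw [Lq_nsmul, dot_smul_left]
  have h1 := hsep _ hg
  have h2 := hm w hwσ
  rw [hval] at h1
  rw [hfse] at h2
  push_cast at h1 h2
  linarith

lemma supp_pow_nu {k : Type*} [Field k] {σ : Set (Fin n → ℚ)} (w : Fin n → ℚ)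
    {a : AddMonoidAlgebra k (latticeDual σ)} (ha : a ≠ 0) (j : ℕ) :
    ∀ t ∈ (a ^ j).coeff.support, (j : ℚ) * (a.coeff.support.inf' (Finsupp.support_nonempty_iff.2 (AddMonoidAlgebra.coeff_eq_zero.not.2 ha))
      (fun u => dot (Lq (u : Fin n → ℤ)) w)) ≤ dot (Lq (t : Fin n → ℤ)) w := by
  classical
  induction j with
  | zero =>
    intro t ht
    rw [pow_zero] at ht
    have : t ∈ ((AddMonoidAlgebra.single 0 1 : AddMonoidAlgebra k (latticeDual σ))).coeff.support := by
      rwa [← AddMonoidAlgebra.one_def]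
    have := Finsupp.support_single_subset this
    rw [Finset.mem_singleton] at this
    subst this
    simp [dot, Lq, ZeroMemClass.coe_zero]
  | succ j ih =>
    intro t ht
    rw [pow_succ] at ht
    have := AddMonoidAlgebra.support_coeff_mul_subset (a ^ j) a ht
    rw [Finset.mem_add] at this
    obtain ⟨z1, hz1, z2, hz2, rfl⟩ := this
    rw [dot_lat_add]
    have b1 := ih z1 hz1
    have b2 : (a.coeff.support.inf' (Finsupp.support_nonempty_iff.2 (AddMonoidAlgebra.coeff_eq_zero.not.2 ha))
        (fun u => dot (Lq (u : Fin n → ℤ)) w)) ≤ dot (Lq (z2 : Fin n → ℤ)) w :=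
      Finset.inf'_le _ hz2
    push_cast
    linarith

lemma hard_dir {k : Type*} [Field k] {K : ℕ} {g : Fin K → Fin n → ℚ} {σ : Set (Fin n → ℚ)}
    (hσeq : σ = {v | ∃ c : Fin K → ℚ, (∀ i, 0 ≤ c i) ∧ v = ∑ i, c i • g i})
    {P : Set (Fin n → ℚ)} {F : Finset (Fin n → ℤ)} (hF : F.Nonempty)
    (hPeq : P = convexHull ℚ (Lq '' (↑F : Set (Fin n → ℤ))) + dualCone σ)
    (hPsub : P ⊆ dualCone σ) {e : ℕ} (he : 1 ≤ e)
    {a : AddMonoidAlgebra k (latticeDual σ)}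
    (hInt : IntegralOverIdeal ((idealOf k σ P) ^ e) a) :
    a ∈ idealOf k σ (mink (dualCone σ) P e) := by
  classical
  by_cases ha : a = 0
  · rw [ha]; exact Ideal.zero_mem _
  obtain ⟨r, hr, c, hc, heq⟩ := hInt
  -- each support point satisfies all the dot inequalities
  have hdots : ∀ u ∈ a.coeff.support, ∀ w ∈ σ,
      (e : ℚ) * F.inf' hF (fun f => dot (Lq f) w) ≤ dot (Lq (u : Fin n → ℤ)) w := by
    intro u hu w hw
    set μ := F.inf' hF (fun f => dot (Lq f) w) with hμ
    set ν := a.coeff.support.inf' (Finsupp.support_nonempty_iff.2 (AddMonoidAlgebra.coeff_eq_zero.not.2 ha))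
      (fun u => dot (Lq (u : Fin n → ℤ)) w) with hν
    have hμ0 : 0 ≤ μ := by
      obtain ⟨fs, hfs, hfse⟩ := Finset.exists_mem_eq_inf' hF (fun f => dot (Lq f) w)
      rw [hμ, hfse]
      exact hPsub (memP_of_memF hPeq hfs) w hw
    have hνu : ν ≤ dot (Lq (u : Fin n → ℤ)) w := Finset.inf'_le _ hu
    -- main claim: e * μ ≤ ν
    suffices hclaim : (e : ℚ) * μ ≤ ν by linarith
    obtain ⟨hrne, t, htmem, htle⟩ := pow_inf w ha r
    -- a ^ r = ∑ of the negatives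
    have hsum : a ^ r = ∑ i ∈ Finset.Icc 1 r, -(c i * a ^ (r - i)) := by
      have hnd : ∑ i ∈ Finset.Icc 1 r, -(c i * a ^ (r - i))
          = -∑ i ∈ Finset.Icc 1 r, (c i * a ^ (r - i)) := by
        rw [← Finset.sum_neg_distrib]
      rw [hnd]
      linear_combination heq
    rw [hsum, AddMonoidAlgebra.coeff_sum] at htmem
    have := Finsupp.support_finset_sum (s := Finset.Icc 1 r)
      (f := fun i => (-(c i * a ^ (r - i))).coeff) htmem
    rw [Finset.mem_biUnion] at this
    obtain ⟨i, hiIcc, hti⟩ := this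
    rw [AddMonoidAlgebra.coeff_neg, Finsupp.support_neg] at hti
    have := AddMonoidAlgebra.support_coeff_mul_subset (c i) (a ^ (r - i)) hti
    rw [Finset.mem_add] at this
    obtain ⟨z1, hz1, z2, hz2, hteq⟩ := this
    have hci : c i ∈ (idealOf k σ P) ^ (e * i) := by
      rw [pow_mul]
      exact hc i hiIcc
    have b1 := supp_pow_mu hPeq hF hw (e * i) hci z1 hz1
    have b2 := supp_pow_nu w ha (r - i) z2 hz2
    rw [Finset.mem_Icc] at hiIcc
    have hWt : dot (Lq (t : Fin n → ℤ)) w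
        = dot (Lq (z1 : Fin n → ℤ)) w + dot (Lq (z2 : Fin n → ℤ)) w := by
      rw [← dot_lat_add, hteq]
    have hcast : ((r - i : ℕ) : ℚ) = (r : ℚ) - (i : ℚ) := by
      push_cast [Nat.cast_sub hiIcc.2]
      ring
    rw [hcast] at b2
    have hi1 : (1 : ℚ) ≤ (i : ℚ) := by exact_mod_cast hiIcc.1
    have h3 : (e : ℚ) * (i : ℚ) * μ + ((r : ℚ) - (i : ℚ)) * ν ≤ (r : ℚ) * ν := by
      have := htle
      push_cast at b1 ⊢
      nlinarith [b1, b2, hWt, htle]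
    have h4 : 0 ≤ (i : ℚ) * (ν - (e : ℚ) * μ) := by nlinarith [h3]
    nlinarith [h4, hi1]
  -- conclude membership
  apply mem_idealOf_of_supp
  intro u hu
  rw [minkQ σ P F hPeq e]
  exact mem_of_dots hσeq hF he (fun w hw => hdots u hu w hw)

-- coefficient filtration for products of linear-ish polynomials
lemma pfil_prod {A : Type*} [CommRing A] (J : Ideal A) {ι : Type*} (s : Finset ι)
    (q : ι → Polynomial A) (hq : ∀ i ∈ s, (q i).coeff 0 ∈ J) :
    ∀ d, (∏ i ∈ s, q i).coeff d ∈ J ^ (s.card - d) := by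
  classical
  induction s using Finset.cons_induction with
  | empty =>
    intro d
    simp only [Finset.prod_empty, Finset.card_empty, Nat.zero_sub, pow_zero,
      Ideal.one_eq_top]
    exact Submodule.mem_top
  | cons a s ha ih =>
    intro d
    rw [Finset.prod_cons, Polynomial.coeff_mul]
    apply Ideal.sum_mem
    rintro ⟨x, y⟩ hxy
    rw [Finset.HasAntidiagonal.mem_antidiagonal] at hxy
    have h1 : (q a).coeff x ∈ J ^ (1 - x) := by
      rcases Nat.eq_zero_or_pos x with hx | hx
      · subst hx
        simpa using hq a (Finset.mem_cons_self a s)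
      · have : 1 - x = 0 := by omega
        rw [this, pow_zero, Ideal.one_eq_top]
        exact Submodule.mem_top
    have h2 : (∏ i ∈ s, q i).coeff y ∈ J ^ (s.card - y) :=
      ih (fun i hi => hq i (Finset.mem_cons_of_mem hi)) y
    have h3 : (q a).coeff x * (∏ i ∈ s, q i).coeff y ∈ J ^ ((1 - x) + (s.card - y)) := by
      rw [pow_add]
      exact Ideal.mul_mem_mul h1 h2
    have h4 : (Finset.cons a s ha).card - d ≤ (1 - x) + (s.card - y) := by
      rw [Finset.card_cons]
      omega
    exact Ideal.pow_le_pow_right h4 h3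

-- determinant trick
lemma det_trick {A : Type*} [CommRing A] [IsDomain A] (J : Ideal A) {nn : ℕ}
    (μ : Fin nn → A) (i0 : Fin nn) (hi0 : μ i0 ≠ 0) (a : A)
    (h : ∀ i, a * μ i ∈ J • (Submodule.span A (Set.range μ) : Submodule A A)) :
    IntegralOverIdeal J a := by
  classical
  -- extract a matrix
  have hB : ∀ i, ∃ d : Fin nn →₀ A, (∀ j, d j ∈ J) ∧ (d.sum fun j c => c • μ j) = a * μ i := by
    intro i
    have := (Submodule.mem_ideal_smul_span_iff_exists_sum J μ (a * μ i)).1 (h i)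
    obtain ⟨d, hd, hsum⟩ := this
    exact ⟨d, hd, hsum⟩
  choose d hdJ hdsum using hB
  set B : Matrix (Fin nn) (Fin nn) A := fun i j => d i j with hBdef
  -- (a • 1 - B) *ᵥ μ = 0
  have hvec : (a • (1 : Matrix (Fin nn) (Fin nn) A) - B).mulVec μ = 0 := by
    funext i
    have hrow : B.mulVec μ i = a * μ i := by
      rw [Matrix.mulVec, dotProduct]
      rw [← hdsum i, Finsupp.sum_fintype]
      · apply Finset.sum_congr rfl
        intro j _
        rw [smul_eq_mul]
      · intro j; rw [zero_smul]
    have : (a • (1 : Matrix (Fin nn) (Fin nn) A) - B).mulVec μ i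
        = a * μ i - B.mulVec μ i := by
      rw [Matrix.sub_mulVec, Matrix.smul_mulVec, Matrix.one_mulVec]
      simp [smul_eq_mul]
    rw [this, hrow]
    simp
  -- determinant vanishes
  have hdet : (a • (1 : Matrix (Fin nn) (Fin nn) A) - B).det = 0 := by
    set M := a • (1 : Matrix (Fin nn) (Fin nn) A) - B with hM
    have h1 : M.adjugate.mulVec (M.mulVec μ) = M.det • μ := by
      rw [Matrix.mulVec_mulVec, Matrix.adjugate_mul, Matrix.smul_mulVec,
        Matrix.one_mulVec]
    rw [hvec, Matrix.mulVec_zero] at h1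
    have h2 : M.det * μ i0 = 0 := by
      have := congrFun h1.symm i0
      simpa [smul_eq_mul] using this
    rcases mul_eq_zero.1 h2 with h3 | h3
    · exact h3
    · exact absurd h3 hi0
  -- charpoly evaluation
  set p := B.charpoly with hp
  have heval : p.eval a = (a • (1 : Matrix (Fin nn) (Fin nn) A) - B).det := by
    rw [hp, Matrix.charpoly, ← Polynomial.coe_evalRingHom, RingHom.map_det]
    congr 1
    funext i j
    simp only [RingHom.mapMatrix_apply, Matrix.map_apply, Matrix.charmatrix_apply,
      Polynomial.coe_evalRingHom, Matrix.sub_apply, Matrix.smul_apply, Matrix.one_apply,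
      Matrix.diagonal_apply]
    by_cases hij : i = j <;> simp [hij, smul_eq_mul]
  rw [hdet] at heval
  -- coefficient filtration of charpoly
  have hfil : ∀ dg, p.coeff dg ∈ J ^ (nn - dg) := by
    intro dg
    rw [hp, Matrix.charpoly, Matrix.det_apply, Polynomial.finset_sum_coeff]
    apply Ideal.sum_mem
    intro σp _
    rw [Polynomial.coeff_smul]
    rw [Units.smul_def]
    have hmem : (∏ i, (Matrix.charmatrix B) (σp i) i).coeff dg ∈ J ^ (nn - dg) := by
      have := pfil_prod J Finset.univ (fun i => (Matrix.charmatrix B) (σp i) i) ?_ dg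
      · simpa using this
      · intro i _
        simp only [Matrix.charmatrix_apply, Polynomial.coeff_sub]
        have hd0 : (Matrix.diagonal (fun _ : Fin nn => (Polynomial.X : Polynomial A)) (σp i) i).coeff 0 = 0 := by
          rw [Matrix.diagonal_apply]
          by_cases hij : σp i = i <;> simp [hij]
        rw [hd0, Polynomial.coeff_C, zero_sub]
        simp only [if_pos rfl]
        exact Submodule.neg_mem _ (hdJ (σp i) i)
    exact Submodule.smul_of_tower_mem _ _ hmem
  -- assemble the integral equation
  have hnn : 0 < nn := i0.pos
  haveI : Nontrivial A := inferInstance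
  have hdeg : p.natDegree = nn := by
    have := Matrix.charpoly_natDegree_eq_dim B
    rwa [Fintype.card_fin] at this
  have hmonic : p.coeff nn = 1 := by
    have := (Matrix.charpoly_monic B).coeff_natDegree
    rwa [hdeg] at this
  refine ⟨nn, hnn, fun i => p.coeff (nn - i), ?_, ?_⟩
  · intro i hi
    rw [Finset.mem_Icc] at hi
    have := hfil (nn - i)
    rwa [Nat.sub_sub_self hi.2] at this
  · have hzero := heval.symm
    rw [Polynomial.eval_eq_sum_range, hdeg] at hzero
    rw [Finset.sum_range_succ, hmonic, one_mul] at hzero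
    have hre : ∑ i ∈ Finset.range nn, p.coeff i * a ^ i
        = ∑ i ∈ Finset.Icc 1 nn, p.coeff (nn - i) * a ^ (nn - i) := by
      refine Finset.sum_nbij' (fun i => nn - i) (fun i => nn - i) ?_ ?_ ?_ ?_ ?_
      · intro i hi
        rw [Finset.mem_range] at hi
        rw [Finset.mem_Icc]
        omega
      · intro i hi
        rw [Finset.mem_Icc] at hi
        rw [Finset.mem_range]
        omega
      · intro i hi
        rw [Finset.mem_range] at hi
        omega
      · intro i hi
        rw [Finset.mem_Icc] at hi
        omega
      · intro i hi
        rw [Finset.mem_range] at hi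
        have h5 : nn - (nn - i) = i := by omega
        rw [h5]
    rw [hre] at hzero
    rw [add_comm]
    exact hzero.symm

lemma rat_clear {q : ℚ} (hq : 0 ≤ q) {L : ℕ} (hd : q.den ∣ L) :
    ∃ kk : ℕ, (kk : ℚ) = q * L := by
  obtain ⟨c0, hc0⟩ := hd
  refine ⟨q.num.toNat * c0, ?_⟩
  have hnum : (0 : ℤ) ≤ q.num := Rat.num_nonneg.2 hq
  have h2 : ((q.num.toNat * c0 : ℕ) : ℚ) = (q.num : ℚ) * (c0 : ℚ) := by
    push_cast [Int.toNat_of_nonneg hnum]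
    rw [show ((q.num.toNat : ℕ) : ℚ) = ((q.num : ℤ) : ℚ) from by
      exact_mod_cast congrArg (fun z : ℤ => (z : ℚ)) (Int.toNat_of_nonneg hnum)]
  rw [h2, hc0]
  push_cast
  rw [← mul_assoc, Rat.mul_den_eq_num]

lemma prod_pow_mem {A : Type*} [CommRing A] (I : Ideal A) {ι : Type*} (s : Finset ι)
    (x : ι → A) (hx : ∀ i ∈ s, x i ∈ I) (kf : ι → ℕ) :
    (∏ i ∈ s, x i ^ kf i) ∈ I ^ (∑ i ∈ s, kf i) := by
  classical
  induction s using Finset.cons_induction with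
  | empty =>
    simp only [Finset.prod_empty, Finset.sum_empty, pow_zero, Ideal.one_eq_top]
    exact Submodule.mem_top
  | cons a s ha ih =>
    rw [Finset.prod_cons, Finset.sum_cons, pow_add]
    exact Ideal.mul_mem_mul (Ideal.pow_mem_pow (hx a (Finset.mem_cons_self a s)) _)
      (ih (fun i hi => hx i (Finset.mem_cons_of_mem hi)))

lemma mono_sumF_pow {k : Type*} [Field k] {σ P : Set (Fin n → ℚ)} {F : Finset (Fin n → ℤ)}
    (hPeq : P = convexHull ℚ (Lq '' (↑F : Set (Fin n → ℤ))) + dualCone σ)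
    (hPsub : P ⊆ dualCone σ) {e : ℕ} {m : latticeDual σ}
    (hm : (m : Fin n → ℤ) ∈ sumF F e) : mono k σ m ∈ (idealOf k σ P) ^ e := by
  induction e generalizing m with
  | zero =>
    simp only [sumF, Finset.mem_singleton] at hm
    have : m = 0 := Subtype.ext hm
    rw [this, mono_zero, pow_zero, Ideal.one_eq_top]
    exact Submodule.mem_top
  | succ e ih =>
    obtain ⟨y, hy, f, hf, hyf⟩ := mem_sumF_succ.1 hm
    set yl : latticeDual σ := ⟨y, sumF_dual hPeq hPsub hy⟩ with hyl
    set fl : latticeDual σ := ⟨f, hPsub (memP_of_memF hPeq hf)⟩ with hfl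
    have hmeq : m = yl + fl := Subtype.ext (by rw [← hyf]; rfl)
    rw [hmeq, mono_mul, pow_succ]
    exact Ideal.mul_mem_mul (ih hy)
      (Ideal.subset_span ⟨fl, memP_of_memF hPeq hf, rfl⟩)

lemma mink_absorb {σ P : Set (Fin n → ℚ)} {F : Finset (Fin n → ℤ)}
    (hPeq : P = convexHull ℚ (Lq '' (↑F : Set (Fin n → ℤ))) + dualCone σ)
    (e : ℕ) {q s : Fin n → ℚ} (hq : q ∈ mink (dualCone σ) P e) (hs : s ∈ dualCone σ) :
    q + s ∈ mink (dualCone σ) P e := by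
  rw [minkQ σ P F hPeq e] at hq ⊢
  obtain ⟨y, hy, sv, hsv, rfl⟩ := hq
  exact ⟨y, hy, sv + s, dc_add hsv hs, by rw [add_assoc]⟩

lemma mono_pow_decomp {k : Type*} [Field k] {σ P : Set (Fin n → ℚ)} {F : Finset (Fin n → ℤ)}
    (hPeq : P = convexHull ℚ (Lq '' (↑F : Set (Fin n → ℤ))) + dualCone σ)
    (hPsub : P ⊆ dualCone σ) {e : ℕ} {u : latticeDual σ}
    (hu : Lq (u : Fin n → ℤ) ∈ convexHull ℚ (Lq '' (↑(sumF F e) : Set (Fin n → ℤ))) + dualCone σ) :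
    ∃ L : ℕ, 0 < L ∧ ∃ W : Finset (AddMonoidAlgebra k (latticeDual σ)),
      W.Nonempty ∧ (∀ x ∈ W, x ∈ (idealOf k σ P) ^ e ∧ x ≠ 0) ∧
      (mono k σ u) ^ L ∈ (Ideal.span (W : Set (AddMonoidAlgebra k (latticeDual σ)))) ^ L := by
  classical
  obtain ⟨y, hy, sv, hsv, hysum⟩ := hu
  rw [_root_.convexHull_eq] at hy
  obtain ⟨ι, t, wt, z, hw0, hw1, hz, hcm⟩ := hy
  have hζ : ∀ i ∈ t, ∃ gz, gz ∈ sumF F e ∧ Lq gz = z i := by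
    intro i hi
    obtain ⟨gz, hgz, hgze⟩ := hz i hi
    exact ⟨gz, hgz, hgze⟩
  choose! ζ hζ1 hζ2 using hζ
  set L : ℕ := ∏ i ∈ t, (wt i).den with hL
  have hLpos : 0 < L := Finset.prod_pos (fun i _ => (wt i).pos)
  have hk : ∀ i ∈ t, ∃ kk : ℕ, (kk : ℚ) = wt i * L := by
    intro i hi
    exact rat_clear (hw0 i hi) (Finset.dvd_prod_of_mem _ hi)
  choose! kf hkf using hk
  have hksum : ∑ i ∈ t, kf i = L := by
    have : ((∑ i ∈ t, kf i : ℕ) : ℚ) = ((L : ℕ) : ℚ) := by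
      push_cast
      rw [Finset.sum_congr rfl (fun i hi => hkf i hi)]
      rw [← Finset.sum_mul, hw1, one_mul]
    exact_mod_cast this
  -- the lattice identity
  set S : Fin n → ℤ := L • (u : Fin n → ℤ) - ∑ i ∈ t, kf i • ζ i with hS
  have hLqS : Lq S = (L : ℚ) • sv := by
    rw [hS]
    have hsub : Lq (L • (u : Fin n → ℤ) - ∑ i ∈ t, kf i • ζ i)
        = Lq (L • (u : Fin n → ℤ)) - Lq (∑ i ∈ t, kf i • ζ i) := by
      funext j
      simp [Lq]
    rw [hsub, Lq_nsmul, Lq_sum]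
    have hz2 : ∑ i ∈ t, Lq (kf i • ζ i) = ∑ i ∈ t, (wt i * L) • z i := by
      apply Finset.sum_congr rfl
      intro i hi
      rw [Lq_nsmul, hζ2 i hi, hkf i hi]
    rw [hz2]
    have hzy : ∑ i ∈ t, (wt i * L) • z i = (L : ℚ) • y := by
      have : y = ∑ i ∈ t, wt i • z i := by
        rw [← hcm, Finset.centerMass_eq_of_sum_1 _ _ hw1]
      rw [this, Finset.smul_sum]
      apply Finset.sum_congr rfl
      intro i hi
      rw [smul_smul, mul_comm]
    rw [hzy, ← hysum]
    rw [smul_add]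
    abel
  have hSmem : Lq S ∈ dualCone σ := by
    rw [hLqS]
    exact dc_smul (by positivity) hsv
  set Sl : latticeDual σ := ⟨S, hSmem⟩ with hSl
  set zl : ι → latticeDual σ := fun i =>
    if hi : i ∈ t then ⟨ζ i, sumF_dual hPeq hPsub (hζ1 i hi)⟩ else 0 with hzl
  have hid : L • u = (∑ i ∈ t.attach, kf i.1 • zl i.1) + Sl := by
    apply Subtype.ext
    have hcoe : ((∑ i ∈ t.attach, kf i.1 • zl i.1 : latticeDual σ) : Fin n → ℤ)
        = ∑ i ∈ t.attach, kf i.1 • (zl i.1 : Fin n → ℤ) := by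
      rw [show ((∑ i ∈ t.attach, kf i.1 • zl i.1 : latticeDual σ) : Fin n → ℤ)
        = (latticeDual σ).subtype (∑ i ∈ t.attach, kf i.1 • zl i.1) from rfl]
      rw [map_sum]
      apply Finset.sum_congr rfl
      intro i _
      rfl
    show L • (u : Fin n → ℤ) = _
    rw [show (((∑ i ∈ t.attach, kf i.1 • zl i.1) + Sl : latticeDual σ) : Fin n → ℤ)
        = ((∑ i ∈ t.attach, kf i.1 • zl i.1 : latticeDual σ) : Fin n → ℤ) + S from rfl]
    rw [hcoe]
    have hzeta : ∀ i ∈ t.attach, kf i.1 • (zl i.1 : Fin n → ℤ) = kf i.1 • ζ i.1 := by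
      intro i _
      have : zl i.1 = ⟨ζ i.1, sumF_dual hPeq hPsub (hζ1 _ i.2)⟩ := by
        rw [hzl]
        simp [i.2]
      rw [this]
    rw [Finset.sum_congr rfl hzeta, Finset.sum_attach t (fun i => kf i • ζ i), hS]
    abel
  -- the generators
  set W : Finset (AddMonoidAlgebra k (latticeDual σ)) :=
    t.attach.image (fun i : {x // x ∈ t} => mono k σ (zl i.1)) with hW
  have htne : t.Nonempty := by
    by_contra hemp
    rw [Finset.not_nonempty_iff_eq_empty] at hemp
    rw [hemp] at hw1
    simp at hw1
  refine ⟨L, hLpos, W, ?_, ?_, ?_⟩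
  · obtain ⟨i, hi⟩ := htne
    exact ⟨mono k σ (zl i), Finset.mem_image.2 ⟨⟨i, hi⟩, Finset.mem_attach t _, rfl⟩⟩
  · intro x hx
    rw [hW, Finset.mem_image] at hx
    obtain ⟨i, _, rfl⟩ := hx
    constructor
    · apply mono_sumF_pow hPeq hPsub
      have : zl i.1 = ⟨ζ i.1, sumF_dual hPeq hPsub (hζ1 _ i.2)⟩ := by
        rw [hzl]; simp [i.2]
      rw [this]
      exact hζ1 _ i.2
    · exact mono_ne_zero σ _
  · rw [← mono_pow, hid, mono_mul, mono_sum]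
    apply Ideal.mul_mem_right
    have : ∀ i ∈ t.attach, mono k σ (kf i.1 • zl i.1) = (mono k σ (zl i.1)) ^ (kf i.1) := by
      intro i _
      rw [mono_pow]
    rw [Finset.prod_congr rfl this]
    have hsum2 : ∑ i ∈ t.attach, kf i.1 = L := by
      rw [Finset.sum_attach t kf]
      exact hksum
    rw [← hsum2]
    apply prod_pow_mem
    intro i _
    exact Ideal.subset_span (Finset.mem_image.2 ⟨i, Finset.mem_attach _ _, rfl⟩)

lemma easy_dir {k : Type*} [Field k] {σ P : Set (Fin n → ℚ)} {F : Finset (Fin n → ℤ)}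
    (hPeq : P = convexHull ℚ (Lq '' (↑F : Set (Fin n → ℤ))) + dualCone σ)
    (hPsub : P ⊆ dualCone σ) (e : ℕ)
    {a : AddMonoidAlgebra k (latticeDual σ)}
    (ha : a ∈ idealOf k σ (mink (dualCone σ) P e)) :
    IntegralOverIdeal ((idealOf k σ P) ^ e) a := by
  classical
  haveI := lat_nzd k σ
  haveI : IsDomain (AddMonoidAlgebra k (latticeDual σ)) := NoZeroDivisors.to_isDomain _
  by_cases ha0 : a = 0
  · refine ⟨1, one_pos, fun _ => 0, fun i _ => Ideal.zero_mem _, ?_⟩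
    rw [ha0]
    simp
  set s := a.coeff.support with hs
  have hsne : s.Nonempty := Finsupp.support_nonempty_iff.2 (AddMonoidAlgebra.coeff_eq_zero.not.2 ha0)
  have hsupp : ∀ u ∈ s, Lq (u : Fin n → ℤ)
      ∈ convexHull ℚ (Lq '' (↑(sumF F e) : Set (Fin n → ℤ))) + dualCone σ := by
    intro u hu
    obtain ⟨m, hm, sv, rfl⟩ := supp_span ha u hu
    rw [← minkQ σ P F hPeq e]
    have : Lq ((m + sv : latticeDual σ) : Fin n → ℤ) = Lq (m : Fin n → ℤ) + Lq (sv : Fin n → ℤ) := by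
      rw [show ((m + sv : latticeDual σ) : Fin n → ℤ) = (m : Fin n → ℤ) + (sv : Fin n → ℤ) from rfl,
        Lq_add]
    rw [this]
    exact mink_absorb hPeq e hm (sv.2)
  have hdec := fun (u : latticeDual σ) (hu : u ∈ s) =>
    mono_pow_decomp (k := k) hPeq hPsub (hsupp u hu)
  choose! Lf hLpos Wf hWne hWprop hWpow using hdec
  -- finitely generated ideal J1
  set WW : Finset (AddMonoidAlgebra k (latticeDual σ)) := s.biUnion Wf with hWW
  set J1 : Ideal (AddMonoidAlgebra k (latticeDual σ)) :=
    Ideal.span (WW : Set (AddMonoidAlgebra k (latticeDual σ))) with hJ1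
  have hJ1le : J1 ≤ (idealOf k σ P) ^ e := by
    rw [hJ1, Ideal.span_le]
    intro x hx
    rw [Finset.mem_coe, Finset.mem_biUnion] at hx
    obtain ⟨u, hu, hxW⟩ := hx
    exact (hWprop u hu x hxW).1
  have hJ1FG : J1.FG := Submodule.fg_span (Finset.finite_toSet _)
  have hMonoPow : ∀ u ∈ s, (mono k σ u) ^ (Lf u) ∈ J1 ^ (Lf u) := by
    intro u hu
    apply Ideal.pow_right_mono _ (Lf u) (hWpow u hu)
    rw [hJ1]
    apply Ideal.span_mono
    intro x hx
    rw [Finset.mem_coe] at hx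
    rw [Finset.mem_coe, Finset.mem_biUnion]
    exact ⟨u, hu, hx⟩
  set xf : latticeDual σ → AddMonoidAlgebra k (latticeDual σ) :=
    fun u => AddMonoidAlgebra.single u (a.coeff u) with hxf
  have hxfsm : ∀ u, xf u = (a.coeff u) • mono k σ u := by
    intro u
    rw [hxf, mono, AddMonoidAlgebra.smul_single', mul_one]
  have hxf_pow : ∀ u ∈ s, (xf u) ^ (Lf u) ∈ J1 ^ (Lf u) := by
    intro u hu
    rw [hxfsm u, smul_pow]
    exact Submodule.smul_of_tower_mem _ _ (hMonoPow u hu)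
  have ha_sum : a = ∑ u ∈ s, xf u := by
    conv_lhs => rw [← AddMonoidAlgebra.sum_coeff_single a]
    rfl
  -- the module M
  set K := (∀ u : {x // x ∈ s}, Fin (Lf u.1)) with hK
  haveI : Fintype K := by
    apply Pi.instFintype
  set deg : K → ℕ := fun kk => ∑ u : {x // x ∈ s}, (kk u : ℕ) with hdeg
  set ctot : ℕ := ∑ u : {x // x ∈ s}, (Lf u.1 - 1) with hctot
  have hdegle : ∀ kk : K, deg kk ≤ ctot := by
    intro kk
    apply Finset.sum_le_sum
    intro u _
    have := (kk u).2
    omega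
  set xk : K → AddMonoidAlgebra k (latticeDual σ) :=
    fun kk => ∏ u : {x // x ∈ s}, (xf u.1) ^ ((kk u : ℕ)) with hxk
  set N : K → Ideal (AddMonoidAlgebra k (latticeDual σ)) :=
    fun kk => Ideal.span {xk kk} * J1 ^ (ctot - deg kk) with hN
  set M : Ideal (AddMonoidAlgebra k (latticeDual σ)) := ⨆ kk : K, N kk with hM
  have hNleM : ∀ kk : K, N kk ≤ M := fun kk => le_iSup N kk
  have hMFG : M.FG := by
    rw [hM, ← Finset.sup_univ_eq_iSup]
    apply Submodule.fg_finset_sup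
    intro kk _
    exact Submodule.FG.mul (Submodule.fg_span (Set.finite_singleton _)) (Submodule.FG.pow hJ1FG _)
  -- key absorption lemma
  have hkey : ∀ (kk : K) (c : ℕ) (z : AddMonoidAlgebra k (latticeDual σ)),
      z ∈ J1 ^ c → ctot - deg kk ≤ c - 1 → 1 ≤ c → z * xk kk ∈ J1 * M := by
    intro kk c z hz hc1 hc2
    have hcs : J1 ^ c = J1 * J1 ^ (c - 1) := by
      rw [← pow_succ']
      congr 1
      omega
    rw [hcs] at hz
    refine Submodule.mul_induction_on hz ?_ ?_
    · intro p hp q hq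
      have hq2 : q ∈ J1 ^ (ctot - deg kk) := Ideal.pow_le_pow_right hc1 hq
      have : q * xk kk ∈ N kk := by
        simp only [hN]
        rw [mul_comm (Ideal.span {xk kk}) (J1 ^ (ctot - deg kk))]
        exact Ideal.mul_mem_mul hq2 (Ideal.subset_span rfl)
      rw [show p * q * xk kk = p * (q * xk kk) from by ring]
      exact Ideal.mul_mem_mul hp (hNleM kk this)
    · intro x y hx hy
      rw [add_mul]
      exact Ideal.add_mem _ hx hy
  -- product split helpers
  have hxk_split : ∀ (kk : K) (w : {x // x ∈ s}),
      xk kk = (xf w.1) ^ ((kk w : ℕ)) * ∏ v ∈ Finset.univ.erase w, (xf v.1) ^ ((kk v : ℕ)) :=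
    fun kk w => (Finset.mul_prod_erase Finset.univ _ (Finset.mem_univ w)).symm
  have hdeg_split : ∀ (kk : K) (w : {x // x ∈ s}),
      deg kk = (kk w : ℕ) + ∑ v ∈ Finset.univ.erase w, (kk v : ℕ) :=
    fun kk w => (Finset.add_sum_erase Finset.univ _ (Finset.mem_univ w)).symm
  -- the step
  have hstep : ∀ u (hu : u ∈ s) (kk : K) (q : AddMonoidAlgebra k (latticeDual σ)),
      q ∈ J1 ^ (ctot - deg kk) → xf u * (xk kk * q) ∈ J1 * M := by
    intro u hu kk q hq
    set uh : {x // x ∈ s} := ⟨u, hu⟩ with huh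
    by_cases hcase : ((kk uh : ℕ)) + 1 < Lf u
    · -- increment
      set kk' : K := Function.update kk uh ⟨(kk uh : ℕ) + 1, hcase⟩ with hkk'
      have hupd : ∀ v : {x // x ∈ s}, ((kk' v : ℕ)) = Function.update (fun v => (kk v : ℕ)) uh ((kk uh : ℕ) + 1) v := by
        intro v
        rw [hkk']
        by_cases hv : v = uh
        · subst hv; simp
        · simp [Function.update_apply, hv]
      have hxkk' : xk kk' = xf u * xk kk := by
        rw [hxk_split kk' uh, hxk_split kk uh]
        have h1 : ((kk' uh : ℕ)) = (kk uh : ℕ) + 1 := by rw [hupd uh]; simp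
        have h2 : ∀ v ∈ Finset.univ.erase uh, (xf v.1) ^ ((kk' v : ℕ)) = (xf v.1) ^ ((kk v : ℕ)) := by
          intro v hv
          have hvne : v ≠ uh := (Finset.mem_erase.1 hv).1
          rw [hupd v, Function.update_apply]
          simp [hvne]
        rw [h1, Finset.prod_congr rfl h2, pow_succ]
        show xf uh.1 ^ (kk uh : ℕ) * xf uh.1 * _ = _
        ring
      have hdegk' : deg kk' = deg kk + 1 := by
        rw [hdeg_split kk' uh, hdeg_split kk uh]
        have h1 : ((kk' uh : ℕ)) = (kk uh : ℕ) + 1 := by rw [hupd uh]; simp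
        have h2 : ∀ v ∈ Finset.univ.erase uh, ((kk' v : ℕ)) = ((kk v : ℕ)) := by
          intro v hv
          have hvne : v ≠ uh := (Finset.mem_erase.1 hv).1
          rw [hupd v, Function.update_apply]
          simp [hvne]
        rw [h1, Finset.sum_congr rfl h2]
        omega
      have hdlt : deg kk < ctot := by
        have h5 := hdegle kk'
        rw [hdegk'] at h5
        omega
      rw [show xf u * (xk kk * q) = q * xk kk' from by rw [hxkk']; ring]
      refine hkey kk' (ctot - deg kk) q hq ?_ ?_
      · rw [hdegk']
        exact le_of_eq (Nat.sub_sub ctot (deg kk) 1).symm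
      · exact Nat.le_sub_of_add_le (by rw [add_comm]; exact hdlt)
    · -- overflow
      have hkmax : ((kk uh : ℕ)) = Lf u - 1 := by
        have h7 := (kk uh).2
        have h8 : Lf ((uh : {x // x ∈ s}) : latticeDual σ) = Lf u := rfl
        omega
      have hLu : 1 ≤ Lf u := hLpos u hu
      set kk'' : K := Function.update kk uh ⟨0, by omega⟩ with hkk''
      have hupd : ∀ v : {x // x ∈ s}, ((kk'' v : ℕ)) = Function.update (fun v => (kk v : ℕ)) uh 0 v := by
        intro v
        rw [hkk'']
        by_cases hv : v = uh
        · subst hv; simp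
        · simp [Function.update_apply, hv]
      have hxkk'' : xk kk = (xf u) ^ (Lf u - 1) * xk kk'' := by
        rw [hxk_split kk uh, hxk_split kk'' uh]
        have h1 : ((kk'' uh : ℕ)) = 0 := by rw [hupd uh]; simp
        have h2 : ∀ v ∈ Finset.univ.erase uh, (xf v.1) ^ ((kk'' v : ℕ)) = (xf v.1) ^ ((kk v : ℕ)) := by
          intro v hv
          have hvne : v ≠ uh := (Finset.mem_erase.1 hv).1
          rw [hupd v, Function.update_apply]
          simp [hvne]
        rw [h1, Finset.prod_congr rfl h2, pow_zero, one_mul, hkmax]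
      have hdegk'' : deg kk'' = deg kk - (Lf u - 1) := by
        rw [hdeg_split kk'' uh, hdeg_split kk uh]
        have h1 : ((kk'' uh : ℕ)) = 0 := by rw [hupd uh]; simp
        have h2 : ∀ v ∈ Finset.univ.erase uh, ((kk'' v : ℕ)) = ((kk v : ℕ)) := by
          intro v hv
          have hvne : v ≠ uh := (Finset.mem_erase.1 hv).1
          rw [hupd v, Function.update_apply]
          simp [hvne]
        rw [h1, Finset.sum_congr rfl h2, hkmax]
        omega
      have hele : xf u * (xk kk * q) = ((xf u) ^ (Lf u) * q) * xk kk'' := by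
        rw [hxkk'']
        rw [show (xf u) ^ (Lf u) = xf u * (xf u) ^ (Lf u - 1) from by
          rw [← pow_succ']
          congr 1
          omega]
        ring
      rw [hele]
      have hz : (xf u) ^ (Lf u) * q ∈ J1 ^ (Lf u + (ctot - deg kk)) := by
        rw [pow_add]
        exact Ideal.mul_mem_mul (hxf_pow u hu) hq
      refine hkey kk'' (Lf u + (ctot - deg kk)) _ hz ?_ ?_
      · have h6 := hdegle kk
        have hb : (kk uh : ℕ) ≤ deg kk := by
          rw [hdeg_split kk uh]
          exact Nat.le_add_right _ _
        rw [hdegk'']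
        rw [hkmax] at hb
        omega
      · exact le_trans hLu (Nat.le_add_right _ _)
  -- a * M ⊆ J1 * M
  have haM : ∀ m ∈ M, a * m ∈ J1 * M := by
    intro m hm
    rw [hM] at hm
    refine Submodule.iSup_induction (motive := fun x => a * x ∈ J1 * M) N hm ?_ ?_ ?_
    · intro kk m' hm'
      rw [hN] at hm'
      refine Submodule.mul_induction_on hm' ?_ ?_
      · intro p hp q hq
        obtain ⟨cc, hcc⟩ := Ideal.mem_span_singleton'.1 hp
        show a * (p * q) ∈ J1 * M
        have hre : a * (p * q) = cc * (a * (xk kk * q)) := by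
          rw [← hcc]
          ring
        rw [hre]
        apply Ideal.mul_mem_left
        rw [ha_sum, Finset.sum_mul]
        apply Ideal.sum_mem
        intro u hu
        exact hstep u hu kk q hq
      · intro x y hx hy
        show a * (x + y) ∈ J1 * M
        rw [mul_add]
        exact Ideal.add_mem _ hx hy
    · show a * 0 ∈ J1 * M
      rw [mul_zero]
      exact Ideal.zero_mem _
    · intro x y hx hy
      show a * (x + y) ∈ J1 * M
      rw [mul_add]
      exact Ideal.add_mem _ hx hy
  -- a nonzero element of M
  obtain ⟨u0, hu0⟩ := hsne
  obtain ⟨w0, hw0⟩ := hWne u0 hu0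
  have hw0J1 : w0 ∈ J1 := by
    rw [hJ1]
    apply Ideal.subset_span
    rw [Finset.mem_coe, Finset.mem_biUnion]
    exact ⟨u0, hu0, hw0⟩
  set kk0 : K := fun u => ⟨0, hLpos u.1 u.2⟩ with hkk0
  have hxk0 : xk kk0 = 1 := by
    simp only [hxk]
    apply Finset.prod_eq_one
    intro u _
    show xf (u : latticeDual σ) ^ ((kk0 u : ℕ)) = 1
    rw [show ((kk0 u : ℕ)) = 0 from rfl, pow_zero]
  have hdeg0 : deg kk0 = 0 := by
    simp only [hdeg]
    apply Finset.sum_eq_zero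
    intro u _
    rfl
  have helt : xk kk0 * w0 ^ ctot ∈ M := by
    apply hNleM kk0
    simp only [hN]
    rw [hdeg0, Nat.sub_zero]
    exact Ideal.mul_mem_mul (Ideal.subset_span rfl) (Ideal.pow_mem_pow hw0J1 ctot)
  have heltne : xk kk0 * w0 ^ ctot ≠ 0 := by
    rw [hxk0, one_mul]
    exact pow_ne_zero _ (hWprop u0 hu0 w0 hw0).2
  -- generators and determinant trick
  obtain ⟨nn, μ, hspan⟩ := Submodule.fg_iff_exists_fin_generating_family.1 hMFG
  have hexi : ∃ i0 : Fin nn, μ i0 ≠ 0 := by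
    by_contra hcon
    push_neg at hcon
    have : M ≤ ⊥ := by
      rw [← hspan, Submodule.span_le]
      rintro x ⟨i, rfl⟩
      rw [hcon i]
      exact Submodule.zero_mem ⊥
    exact heltne (Submodule.mem_bot _ |>.1 (this helt))
  obtain ⟨i0, hi0⟩ := hexi
  have hint : IntegralOverIdeal J1 a := by
    apply det_trick J1 μ i0 hi0 a
    intro i
    rw [hspan, Ideal.smul_eq_mul]
    apply haM
    rw [← hspan]
    exact Submodule.subset_span ⟨i, rfl⟩
  obtain ⟨r, hr, c, hc, heq⟩ := hint
  exact ⟨r, hr, c, fun i hi => Ideal.pow_right_mono hJ1le i (hc i hi), heq⟩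

end Work

/-- for an integral `σ∨`-polyhedron `P ⊆ σ∨` and every `e ≥ 1`, the integral
closure of `I[P]^e` in `A = k[σ∨ ∩ ℤⁿ]` equals `I[eP]`. -/
theorem statement10 {k : Type*} [Field k] [IsAlgClosed k] [CharZero k]
    {n : ℕ} (σ : Set (Fin n → ℚ)) (hσ : IsPolyhedralCone σ) (hσp : Pointed σ)
    (P : Set (Fin n → ℚ)) (hP : IsIntegralPoly (dualCone σ) P) (hPsub : P ⊆ dualCone σ)
    (e : ℕ) (he : 1 ≤ e) :
    ∀ a : AddMonoidAlgebra k (latticeDual σ),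
      IntegralOverIdeal ((idealOf k σ P) ^ e) a ↔
        a ∈ idealOf k σ (mink (dualCone σ) P e) := by
  obtain ⟨K, g, hσeq⟩ := hσ
  obtain ⟨F, hF, hPeq⟩ := hP
  intro a
  constructor
  · intro hInt
    exact hard_dir hσeq hF hPeq hPsub he hInt
  · intro ha
    exact easy_dir hPeq hPsub e ha

end Paper
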